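/- arXiv:2207.09233 — 7 statements merged into one kernel-verified Lean document; each statement's English description precedes it below -/
import Mathlib

section
/- Let A_K ∈ ℝ^{n×n}, F ∈ ℝ^{n×p}, C ∈ ℝ^{p×n}, D ∈ ℝ^{p×p}, let L ∈ ℝ^{p×p} be symmetric, let P, Γ ∈ ℝ^{n×n} be symmetric, and let ε > 0. Assume: (i) (passivity) for all x ∈ ℝⁿ and v ∈ ℝᵖ, (A_K x + F v)ᵀ P (A_K x + F v) − xᵀ P x ≤ vᵀ(C x + D v) − xᵀ Γ x; and (ii) the matrix Γ + Cᵀ L C − Cᵀ Lᵀ D L C − ε·I is positive semidefinite. Then for every x ∈ ℝⁿ, the closed-loop successor x⁺ = (A_K − F L C) x satisfies (x⁺)ᵀ P x⁺ − xᵀ P x ≤ −ε‖x‖². -/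
open Matrix

/-- Passivity of `x⁺ = A_K x + F v` with virtual output `z = C x + D v`, together
with the coupling condition `Γ + CᵀLC − CᵀLᵀDLC − ε I ⪰ 0`, yields a quadratic
Lyapunov decrease for the interconnected closed loop `x⁺ = (A_K − F L C) x`. -/
theorem stmt_1 {n p : ℕ}
    (A_K : Matrix (Fin n) (Fin n) ℝ) (F : Matrix (Fin n) (Fin p) ℝ)
    (C : Matrix (Fin p) (Fin n) ℝ) (D : Matrix (Fin p) (Fin p) ℝ)
    (L : Matrix (Fin p) (Fin p) ℝ) (hL : L.IsSymm)
    (P Γ : Matrix (Fin n) (Fin n) ℝ) (hP : P.IsSymm) (hΓ : Γ.IsSymm)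
    (ε : ℝ) (hε : 0 < ε)
    (hpass : ∀ (x : Fin n → ℝ) (v : Fin p → ℝ),
      (A_K *ᵥ x + F *ᵥ v) ⬝ᵥ (P *ᵥ (A_K *ᵥ x + F *ᵥ v)) - x ⬝ᵥ (P *ᵥ x)
        ≤ v ⬝ᵥ (C *ᵥ x + D *ᵥ v) - x ⬝ᵥ (Γ *ᵥ x))
    (hcoupling : (Γ + Cᵀ * L * C - Cᵀ * Lᵀ * D * (L * C)
        - ε • (1 : Matrix (Fin n) (Fin n) ℝ)).PosSemidef) :
    ∀ x : EuclideanSpace ℝ (Fin n),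
      ((A_K - F * (L * C)) *ᵥ x) ⬝ᵥ (P *ᵥ ((A_K - F * (L * C)) *ᵥ x))
        - x ⬝ᵥ (P *ᵥ x) ≤ -ε * ‖x‖ ^ 2 := by
  intro x
  have hnorm : ‖x‖ ^ 2 = (x : Fin n → ℝ) ⬝ᵥ x := by
    rw [EuclideanSpace.norm_eq, Real.sq_sqrt (by positivity)]
    simp [dotProduct, sq]
  set xv : Fin n → ℝ := (x : Fin n → ℝ) with hxv
  have key := hpass xv (-(L * C) *ᵥ xv)
  have hcl : A_K *ᵥ xv + F *ᵥ (-(L * C) *ᵥ xv) = (A_K - F * (L * C)) *ᵥ xv := by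
    rw [sub_mulVec, ← mulVec_mulVec]
    simp [neg_mulVec, mulVec_neg, mulVec_mulVec, sub_eq_add_neg]
  rw [hcl] at key
  have hpsd := hcoupling.dotProduct_mulVec_nonneg xv
  simp only [star_trivial] at hpsd
  have hexp : xv ⬝ᵥ ((Γ + Cᵀ * L * C - Cᵀ * Lᵀ * D * (L * C)
      - ε • (1 : Matrix (Fin n) (Fin n) ℝ)) *ᵥ xv)
      = xv ⬝ᵥ (Γ *ᵥ xv) + ((L * C) *ᵥ xv) ⬝ᵥ (C *ᵥ xv)
        - ((L * C) *ᵥ xv) ⬝ᵥ (D *ᵥ ((L * C) *ᵥ xv)) - ε * (xv ⬝ᵥ xv) := by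
    have e1 : xv ⬝ᵥ ((Cᵀ * L * C) *ᵥ xv) = ((L * C) *ᵥ xv) ⬝ᵥ (C *ᵥ xv) := by
      rw [← mulVec_mulVec, ← mulVec_mulVec, dotProduct_mulVec (R := ℝ) xv Cᵀ,
        vecMul_transpose, ← mulVec_mulVec, dotProduct_comm, mulVec_mulVec]
    have e2 : xv ⬝ᵥ ((Cᵀ * Lᵀ * D * (L * C)) *ᵥ xv)
        = ((L * C) *ᵥ xv) ⬝ᵥ (D *ᵥ ((L * C) *ᵥ xv)) := by
      rw [← mulVec_mulVec, ← mulVec_mulVec, ← mulVec_mulVec,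
        dotProduct_mulVec (R := ℝ) xv Cᵀ, vecMul_transpose,
        dotProduct_mulVec (R := ℝ) _ Lᵀ, vecMul_transpose, mulVec_mulVec]
    rw [sub_mulVec, sub_mulVec, add_mulVec, dotProduct_sub, dotProduct_sub,
      dotProduct_add, e1, e2, smul_mulVec, dotProduct_smul, one_mulVec,
      smul_eq_mul]
  rw [hexp] at hpsd
  have hrhs : (-(L * C) *ᵥ xv) ⬝ᵥ (C *ᵥ xv + D *ᵥ (-(L * C) *ᵥ xv)) - xv ⬝ᵥ (Γ *ᵥ xv)
      = -(((L * C) *ᵥ xv) ⬝ᵥ (C *ᵥ xv)) + ((L * C) *ᵥ xv) ⬝ᵥ (D *ᵥ ((L * C) *ᵥ xv))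
        - xv ⬝ᵥ (Γ *ᵥ xv) := by
    simp [neg_mulVec, mulVec_neg, dotProduct_add, neg_dotProduct, dotProduct_neg]
  rw [hrhs] at key
  rw [hnorm]
  linarith
end

section
/- Let A_K ∈ ℝ^{n×n}, F ∈ ℝ^{n×p}, C ∈ ℝ^{p×n}, D ∈ ℝ^{p×p}, let L ∈ ℝ^{p×p} be symmetric, let P ∈ ℝ^{n×n} be symmetric positive definite, let Γ ∈ ℝ^{n×n} be symmetric, and let ε > 0. Assume: (i) for all x ∈ ℝⁿ and v ∈ ℝᵖ, (A_K x + F v)ᵀ P (A_K x + F v) − xᵀ P x ≤ vᵀ(C x + D v) − xᵀ Γ x; and (ii) Γ + Cᵀ L C − Cᵀ Lᵀ D L C − ε·I is positive semidefinite. Then every trajectory of the closed-loop linear system x(t+1) = (A_K − F L C) x(t) converges to the origin as t → ∞. -/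
open Matrix

theorem key_step {n p : ℕ}
    (C : Matrix (Fin p) (Fin n) ℝ) (D : Matrix (Fin p) (Fin p) ℝ)
    (L : Matrix (Fin p) (Fin p) ℝ)
    (Γ : Matrix (Fin n) (Fin n) ℝ)
    (ε : ℝ)
    (hcoupling : (Γ + Cᵀ * L * C - Cᵀ * Lᵀ * D * (L * C)
        - ε • (1 : Matrix (Fin n) (Fin n) ℝ)).PosSemidef)
    (y : Fin n → ℝ) :
    (-((L*C) *ᵥ y)) ⬝ᵥ (C *ᵥ y + D *ᵥ (-((L*C) *ᵥ y))) - y ⬝ᵥ (Γ *ᵥ y)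
      ≤ -(ε * (y ⬝ᵥ y)) := by
  have h := hcoupling.dotProduct_mulVec_nonneg y
  simp only [star_trivial] at h
  have e1 : (Γ + Cᵀ * L * C - Cᵀ * Lᵀ * D * (L * C) - ε • (1 : Matrix (Fin n) (Fin n) ℝ)) *ᵥ y
      = Γ *ᵥ y + Cᵀ *ᵥ (L *ᵥ (C *ᵥ y)) - Cᵀ *ᵥ (Lᵀ *ᵥ (D *ᵥ ((L*C) *ᵥ y))) - ε • y := by
    simp [sub_mulVec, add_mulVec, mulVec_mulVec, smul_mulVec, Matrix.mul_assoc]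
  rw [e1] at h
  simp only [dotProduct_sub, dotProduct_add, dotProduct_smul] at h
  have e2 : y ⬝ᵥ (Cᵀ *ᵥ (L *ᵥ (C *ᵥ y))) = (C *ᵥ y) ⬝ᵥ (L *ᵥ (C *ᵥ y)) := by
    rw [dotProduct_mulVec, vecMul_transpose]
  have e3 : y ⬝ᵥ (Cᵀ *ᵥ (Lᵀ *ᵥ (D *ᵥ ((L*C) *ᵥ y))))
      = ((L*C) *ᵥ y) ⬝ᵥ (D *ᵥ ((L*C) *ᵥ y)) := by
    rw [dotProduct_mulVec, vecMul_transpose, dotProduct_mulVec, vecMul_transpose,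
      mulVec_mulVec]
  have e4 : ((L*C) *ᵥ y) ⬝ᵥ (C *ᵥ y) = (C *ᵥ y) ⬝ᵥ (L *ᵥ (C *ᵥ y)) := by
    rw [← mulVec_mulVec, dotProduct_comm]
  rw [e2, e3] at h
  simp only [neg_dotProduct, dotProduct_neg, mulVec_neg, dotProduct_add, neg_neg,
    smul_eq_mul] at *
  rw [e4]
  linarith

/-- Core of Theorem 1: passivity with quadratic storage `xᵀPx` (P ≻ 0) and
dissipation `xᵀΓx`, plus the coupling condition `Γ + CᵀLC − CᵀLᵀDLC − ε I ⪰ 0`,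
implies that every trajectory of `x(t+1) = (A_K − F L C) x(t)` converges to 0. -/
theorem stmt_2 {n p : ℕ}
    (A_K : Matrix (Fin n) (Fin n) ℝ) (F : Matrix (Fin n) (Fin p) ℝ)
    (C : Matrix (Fin p) (Fin n) ℝ) (D : Matrix (Fin p) (Fin p) ℝ)
    (L : Matrix (Fin p) (Fin p) ℝ) (hL : L.IsSymm)
    (P : Matrix (Fin n) (Fin n) ℝ) (hP : P.PosDef)
    (Γ : Matrix (Fin n) (Fin n) ℝ) (hΓ : Γ.IsSymm)
    (ε : ℝ) (hε : 0 < ε)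
    (hpass : ∀ (x : Fin n → ℝ) (v : Fin p → ℝ),
      (A_K *ᵥ x + F *ᵥ v) ⬝ᵥ (P *ᵥ (A_K *ᵥ x + F *ᵥ v)) - x ⬝ᵥ (P *ᵥ x)
        ≤ v ⬝ᵥ (C *ᵥ x + D *ᵥ v) - x ⬝ᵥ (Γ *ᵥ x))
    (hcoupling : (Γ + Cᵀ * L * C - Cᵀ * Lᵀ * D * (L * C)
        - ε • (1 : Matrix (Fin n) (Fin n) ℝ)).PosSemidef)
    (x : ℕ → Fin n → ℝ)
    (hx : ∀ t, x (t + 1) = (A_K - F * (L * C)) *ᵥ x t) :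
    Filter.Tendsto x Filter.atTop (nhds 0) := by
  set V : ℕ → ℝ := fun t => x t ⬝ᵥ (P *ᵥ x t) with hV
  set q : ℕ → ℝ := fun t => x t ⬝ᵥ x t with hq
  have hq0 : ∀ t, 0 ≤ q t := fun t =>
    Finset.sum_nonneg fun j _ => mul_self_nonneg _
  have hdec : ∀ t, V (t + 1) ≤ V t - ε * q t := by
    intro t
    have h := hpass (x t) (-((L*C) *ᵥ (x t)))
    have e : A_K *ᵥ x t + F *ᵥ (-((L*C) *ᵥ (x t))) = (A_K - F * (L * C)) *ᵥ x t := by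
      simp [sub_mulVec, add_mulVec, neg_mulVec, mulVec_neg, mulVec_mulVec, sub_eq_add_neg]
    rw [e] at h
    have hk := key_step C D L Γ ε hcoupling (x t)
    have := hx t
    simp only [hV, hq, hx t]
    linarith
  have hnonneg : ∀ t, 0 ≤ V t := by
    intro t
    have := hP.posSemidef.dotProduct_mulVec_nonneg (x t)
    simpa using this
  have hanti : Antitone V := antitone_nat_of_succ_le fun t => by
    have := hdec t
    have := mul_nonneg hε.le (hq0 t)
    linarith
  have hbdd : BddBelow (Set.range V) := ⟨0, by rintro _ ⟨t, rfl⟩; exact hnonneg t⟩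
  have hVlim : Filter.Tendsto V Filter.atTop (nhds (⨅ t, V t)) :=
    tendsto_atTop_ciInf hanti hbdd
  have hdiff : Filter.Tendsto (fun t => V t - V (t + 1)) Filter.atTop (nhds 0) := by
    have h2 : Filter.Tendsto (fun t => V (t + 1)) Filter.atTop (nhds (⨅ t, V t)) :=
      hVlim.comp (Filter.tendsto_add_atTop_nat 1)
    simpa using hVlim.sub h2
  have hεq : Filter.Tendsto (fun t => ε * q t) Filter.atTop (nhds 0) := by
    apply squeeze_zero (fun t => mul_nonneg hε.le (hq0 t)) (fun t => by linarith [hdec t]) hdiff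
  have hqlim : Filter.Tendsto q Filter.atTop (nhds 0) := by
    have := hεq.const_mul ε⁻¹
    simpa [mul_assoc, inv_mul_cancel_left₀ hε.ne'] using this
  rw [tendsto_pi_nhds]
  intro i
  have hsq : Filter.Tendsto (fun t => x t i * x t i) Filter.atTop (nhds 0) := by
    apply squeeze_zero (fun t => mul_self_nonneg _) (fun t => ?_) hqlim
    exact Finset.single_le_sum (f := fun j => x t j * x t j)
      (fun j _ => mul_self_nonneg _) (Finset.mem_univ i)
  have habs : Filter.Tendsto (fun t => |x t i|) Filter.atTop (nhds 0) := by
    have h0 := (Real.continuous_sqrt.tendsto 0).comp hsq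
    rw [Real.sqrt_zero] at h0
    exact h0.congr fun t => Real.sqrt_mul_self_eq_abs (x t i)
  have : Filter.Tendsto (fun t => x t i) Filter.atTop (nhds 0) :=
    tendsto_of_tendsto_of_tendsto_of_le_of_le
      (by simpa using habs.neg) habs (fun t => neg_abs_le (x t i))
      (fun t => le_abs_self (x t i))
  simpa using this
end

section
/- Let A ∈ ℝ^{n×n}, B ∈ ℝ^{n×m}, K ∈ ℝ^{m×n}, F ∈ ℝ^{n×p}, C ∈ ℝ^{p×n}. Let P ∈ ℝ^{n×n} be symmetric positive definite, Γ ∈ ℝ^{n×n} diagonal positive definite, and D ∈ ℝ^{p×p} diagonal positive definite. Set E = P⁻¹, Y = K P⁻¹, and X = Γ⁻¹. If the symmetric 4×4 block matrix [[E, ½ E Cᵀ, (A E + B Y)ᵀ, E], [½ C E, D, Fᵀ, 0], [A E + B Y, F, E, 0], [E, 0, 0, X]] is positive semidefinite, then for all x ∈ ℝⁿ and v ∈ ℝᵖ, ((A + B K) x + F v)ᵀ P ((A + B K) x + F v) − xᵀ P x ≤ vᵀ(C x + D v) − xᵀ Γ x. -/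
open Matrix

/-- LMI (11a) of the redesign phase: positive semidefiniteness of the 4×4 block
matrix, with `E = P⁻¹`, `Y = K P⁻¹`, `X = Γ⁻¹`, certifies strict passivity of
`x⁺ = (A + BK) x + F v` with respect to the virtual output `z = C x + D v`,
with storage `xᵀPx` and dissipation `xᵀΓx`. -/
theorem stmt_3 {n m p : ℕ}
    (A : Matrix (Fin n) (Fin n) ℝ) (B : Matrix (Fin n) (Fin m) ℝ)
    (K : Matrix (Fin m) (Fin n) ℝ) (F : Matrix (Fin n) (Fin p) ℝ)
    (C : Matrix (Fin p) (Fin n) ℝ)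
    (P : Matrix (Fin n) (Fin n) ℝ) (hP : P.PosDef)
    (Γ : Matrix (Fin n) (Fin n) ℝ) (hΓdiag : Γ.IsDiag) (hΓ : Γ.PosDef)
    (D : Matrix (Fin p) (Fin p) ℝ) (hDdiag : D.IsDiag) (hD : D.PosDef)
    (E : Matrix (Fin n) (Fin n) ℝ) (hE : E = P⁻¹)
    (Y : Matrix (Fin m) (Fin n) ℝ) (hY : Y = K * P⁻¹)
    (X : Matrix (Fin n) (Fin n) ℝ) (hX : X = Γ⁻¹)
    (hLMI : (Matrix.fromBlocks
        (Matrix.fromBlocks E (((1 : ℝ) / 2) • (E * Cᵀ))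
          (((1 : ℝ) / 2) • (C * E)) D)
        (Matrix.fromBlocks (A * E + B * Y)ᵀ E Fᵀ 0)
        (Matrix.fromBlocks (A * E + B * Y) F E 0)
        (Matrix.fromBlocks E 0 0 X)).PosSemidef) :
    ∀ (x : Fin n → ℝ) (v : Fin p → ℝ),
      ((A + B * K) *ᵥ x + F *ᵥ v) ⬝ᵥ (P *ᵥ ((A + B * K) *ᵥ x + F *ᵥ v))
        - x ⬝ᵥ (P *ᵥ x)
      ≤ v ⬝ᵥ (C *ᵥ x + D *ᵥ v) - x ⬝ᵥ (Γ *ᵥ x) := by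
  intro x v
  have hEP : E * P = 1 := by rw [hE]; exact Matrix.nonsing_inv_mul P ((Matrix.isUnit_iff_isUnit_det P).mp hP.isUnit)
  have hXΓ : X * Γ = 1 := by rw [hX]; exact Matrix.nonsing_inv_mul Γ ((Matrix.isUnit_iff_isUnit_det Γ).mp hΓ.isUnit)
  have hPsym : Pᵀ = P := hP.isHermitian
  have hEsym : Eᵀ = E := by rw [hE, Matrix.transpose_nonsing_inv, hPsym]
  have hXsym : Xᵀ = X := by have hΓsym : Γᵀ = Γ := hΓ.isHermitian; rw [hX, Matrix.transpose_nonsing_inv, hΓsym]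
  have hAE : A * E + B * Y = (A + B * K) * E := by
    rw [hY, ← hE, Matrix.add_mul, Matrix.mul_assoc]
  set xp : Fin n → ℝ := (A + B * K) *ᵥ x + F *ᵥ v with hxp
  have key := hLMI.dotProduct_mulVec_nonneg (Sum.elim (Sum.elim (P *ᵥ x) v)
      (Sum.elim (-(P *ᵥ xp)) (-(Γ *ᵥ x))))
  simp only [star_trivial, hAE, Matrix.fromBlocks_mulVec, sumElim_dotProduct_sumElim,
    Matrix.mulVec_add, Matrix.add_mulVec, dotProduct_add, Matrix.smul_mulVec,
    dotProduct_smul, Matrix.mulVec_neg, Matrix.neg_mulVec, dotProduct_neg, neg_dotProduct,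
    Matrix.zero_mulVec, Matrix.mulVec_zero, dotProduct_zero, add_zero, zero_add,
    Matrix.transpose_mul, hEsym] at key
  have LE : ∀ (y : Fin n → ℝ), E *ᵥ (P *ᵥ y) = y := by
    intro y; rw [Matrix.mulVec_mulVec, hEP, Matrix.one_mulVec]
  have L : ∀ (y w : Fin n → ℝ), (P *ᵥ y) ⬝ᵥ (E *ᵥ w) = y ⬝ᵥ w := by
    intro y w
    rw [Matrix.dotProduct_mulVec, ← Matrix.mulVec_transpose, hEsym, LE]
  have L2 : ∀ (y w : Fin n → ℝ), (Γ *ᵥ y) ⬝ᵥ (X *ᵥ w) = y ⬝ᵥ w := by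
    intro y w
    rw [Matrix.dotProduct_mulVec, ← Matrix.mulVec_transpose, hXsym,
      Matrix.mulVec_mulVec, hXΓ, Matrix.one_mulVec]
  have hT : ∀ {q r : ℕ} (M : Matrix (Fin q) (Fin r) ℝ) (u : Fin r → ℝ) (w : Fin q → ℝ),
      u ⬝ᵥ (Mᵀ *ᵥ w) = (M *ᵥ u) ⬝ᵥ w := by
    intro q r M u w
    rw [Matrix.dotProduct_mulVec, Matrix.vecMul_transpose]
  simp only [Sum.elim_comp_inl, Sum.elim_comp_inr, ← Matrix.mulVec_mulVec, LE, L, L2, hT,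
    dotProduct_neg, neg_dotProduct, Matrix.mulVec_neg, smul_neg, smul_eq_mul] at key
  have c1 := dotProduct_comm (P *ᵥ x) x
  have c2 := dotProduct_comm (C *ᵥ x) v
  have c3 := dotProduct_comm (Γ *ᵥ x) x
  have c4 := dotProduct_comm (P *ᵥ xp) ((A + B * K) *ᵥ x)
  have c5 := dotProduct_comm (P *ᵥ xp) (F *ᵥ v)
  have c6 := dotProduct_comm (P *ᵥ xp) xp
  have hd : ((A + B * K) *ᵥ x) ⬝ᵥ (P *ᵥ xp) + (F *ᵥ v) ⬝ᵥ (P *ᵥ xp)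
      = xp ⬝ᵥ (P *ᵥ xp) := by
    rw [← add_dotProduct, ← hxp]
  rw [dotProduct_add]
  linarith [key, hd, c1, c2, c3, c4, c5, c6]
end

section
/- Let P ∈ ℝ^{n×n} be symmetric positive definite, c ∈ ℝⁿ, α ≥ 0, K ∈ ℝ^{m×n}, d ∈ ℝ^m, H ∈ ℝ^{r×m} and h ∈ ℝ^r. If for every row index l ∈ {1, …, r} the inequality H_l K c + H_l d + α·√((H_l K) P⁻¹ (H_l K)ᵀ) ≤ h_l holds, where H_l denotes the l-th row of H and h_l the l-th entry of h, then every x in the ellipsoid E(P,c,α) = {x ∈ ℝⁿ : (x−c)ᵀP(x−c) ≤ α²} satisfies H(K x + d) ≤ h componentwise. -/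
open Matrix
open scoped MatrixOrder

lemma ellipsoid_dot_le {n : ℕ} (P : Matrix (Fin n) (Fin n) ℝ) (hP : P.PosDef)
    (v z : Fin n → ℝ) (α : ℝ) (hα : 0 ≤ α) (hz : z ⬝ᵥ P *ᵥ z ≤ α ^ 2) :
    v ⬝ᵥ z ≤ α * Real.sqrt (v ⬝ᵥ (P⁻¹ *ᵥ v)) := by
  obtain ⟨S, hS, hsym, hSS, hdet⟩ :
      ∃ S : Matrix (Fin n) (Fin n) ℝ, S.PosSemidef ∧ Sᵀ = S ∧ S * S = P ∧ IsUnit S.det := by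
    refine ⟨CFC.sqrt P, (CFC.sqrt_nonneg P).posSemidef, ?_,
      CFC.sqrt_mul_sqrt_self P hP.posSemidef.nonneg, ?_⟩
    · have := (CFC.sqrt_nonneg P).posSemidef.1
      rwa [Matrix.IsHermitian, conjTranspose_eq_transpose_of_trivial] at this
    · have h1 : (CFC.sqrt P).det * (CFC.sqrt P).det = P.det := by
        rw [← det_mul, CFC.sqrt_mul_sqrt_self P hP.posSemidef.nonneg]
      have h2 : 0 < P.det := hP.det_pos
      have h0 : (CFC.sqrt P).det ≠ 0 := fun h0 => by
        rw [h0, mul_zero] at h1; exact h2.ne' h1.symm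
      exact h0.isUnit
  have hinv : S⁻¹ * S = 1 := nonsing_inv_mul S hdet
  have hSinvT : (S⁻¹)ᵀ = S⁻¹ := by rw [transpose_nonsing_inv, hsym]
  have hmix : ∀ u : Fin n → ℝ, S *ᵥ u = u ᵥ* S := fun u => by
    rw [← mulVec_transpose, hsym]
  have hmixinv : ∀ u : Fin n → ℝ, S⁻¹ *ᵥ u = u ᵥ* S⁻¹ := fun u => by
    rw [← mulVec_transpose, hSinvT]
  have h1 : v ⬝ᵥ z = (v ᵥ* S⁻¹) ⬝ᵥ (S *ᵥ z) := by
    rw [dotProduct_mulVec, vecMul_vecMul, hinv, vecMul_one]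
  have h2 : (S *ᵥ z) ⬝ᵥ (S *ᵥ z) = z ⬝ᵥ P *ᵥ z := by
    rw [dotProduct_mulVec, ← hmix (S *ᵥ z), mulVec_mulVec, hSS, dotProduct_comm,
      dotProduct_mulVec]
  have h3 : (v ᵥ* S⁻¹) ⬝ᵥ (v ᵥ* S⁻¹) = v ⬝ᵥ (P⁻¹ *ᵥ v) := by
    have hPinv : P⁻¹ = S⁻¹ * S⁻¹ := by rw [← hSS, Matrix.mul_inv_rev]
    rw [hPinv, ← mulVec_mulVec, dotProduct_mulVec, hmixinv v]
  have hcs : (v ᵥ* S⁻¹) ⬝ᵥ (S *ᵥ z)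
      ≤ Real.sqrt ((v ᵥ* S⁻¹) ⬝ᵥ (v ᵥ* S⁻¹)) * Real.sqrt ((S *ᵥ z) ⬝ᵥ (S *ᵥ z)) := by
    have := Real.sum_mul_le_sqrt_mul_sqrt Finset.univ (v ᵥ* S⁻¹) (S *ᵥ z)
    simpa [dotProduct, sq] using this
  have hyb : Real.sqrt ((S *ᵥ z) ⬝ᵥ (S *ᵥ z)) ≤ α := by
    rw [h2]
    calc Real.sqrt (z ⬝ᵥ P *ᵥ z) ≤ Real.sqrt (α ^ 2) := Real.sqrt_le_sqrt hz
    _ = α := by rw [Real.sqrt_sq hα]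
  calc v ⬝ᵥ z = (v ᵥ* S⁻¹) ⬝ᵥ (S *ᵥ z) := h1
    _ ≤ Real.sqrt ((v ᵥ* S⁻¹) ⬝ᵥ (v ᵥ* S⁻¹)) * Real.sqrt ((S *ᵥ z) ⬝ᵥ (S *ᵥ z)) := hcs
    _ ≤ Real.sqrt ((v ᵥ* S⁻¹) ⬝ᵥ (v ᵥ* S⁻¹)) * α :=
        mul_le_mul_of_nonneg_left hyb (Real.sqrt_nonneg _)
    _ = α * Real.sqrt (v ⬝ᵥ (P⁻¹ *ᵥ v)) := by rw [h3, mul_comm]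

/-- Constraint (10): if `H_l K c + H_l d + α √((H_l K) P⁻¹ (H_l K)ᵀ) ≤ h_l` for
every row `l`, then the affine terminal controller `κ(x) = Kx + d` satisfies the
input constraints `H u ≤ h` on the ellipsoid `{x : (x−c)ᵀP(x−c) ≤ α²}`. -/
theorem stmt_7 {n m r : ℕ} (P : Matrix (Fin n) (Fin n) ℝ) (hP : P.PosDef)
    (c : Fin n → ℝ) (α : ℝ) (hα : 0 ≤ α)
    (K : Matrix (Fin m) (Fin n) ℝ) (d : Fin m → ℝ)
    (H : Matrix (Fin r) (Fin m) ℝ) (h : Fin r → ℝ)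
    (hrow : ∀ l : Fin r,
      (H l) ᵥ* K ⬝ᵥ c + H l ⬝ᵥ d
        + α * Real.sqrt ((H l) ᵥ* K ⬝ᵥ (P⁻¹ *ᵥ ((H l) ᵥ* K))) ≤ h l) :
    ∀ x : Fin n → ℝ, (x - c) ⬝ᵥ (P *ᵥ (x - c)) ≤ α ^ 2 →
      ∀ l : Fin r, (H *ᵥ (K *ᵥ x + d)) l ≤ h l := by
  intro x hx l
  have key := ellipsoid_dot_le P hP ((H l) ᵥ* K) (x - c) α hα hx
  have hval : (H *ᵥ (K *ᵥ x + d)) l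
      = (H l) ᵥ* K ⬝ᵥ c + H l ⬝ᵥ d + (H l) ᵥ* K ⬝ᵥ (x - c) := by
    have h0 : (H *ᵥ (K *ᵥ x + d)) l = H l ⬝ᵥ (K *ᵥ x + d) := rfl
    rw [h0, dotProduct_add, dotProduct_mulVec, dotProduct_sub]
    ring
  rw [hval]
  calc (H l) ᵥ* K ⬝ᵥ c + H l ⬝ᵥ d + (H l) ᵥ* K ⬝ᵥ (x - c)
      ≤ (H l) ᵥ* K ⬝ᵥ c + H l ⬝ᵥ d
        + α * Real.sqrt ((H l) ᵥ* K ⬝ᵥ (P⁻¹ *ᵥ ((H l) ᵥ* K))) := by linarith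
    _ ≤ h l := hrow l
end

section
/- Let P ∈ ℝ^{n×n} be symmetric positive definite, α > 0, x, c ∈ ℝⁿ, and b̄ ∈ ℝⁿ with nonnegative entries. Write [M]_j for the j-th diagonal entry of a square matrix M and {M}_j for the sum of absolute values of the entries in its j-th row. If (i) 2α·[P⁻¹]_j ≥ b̄_j + α·{P⁻¹}_j for all j ∈ {1,…,n}, (ii) α ≥ Σ_{j=1}^{n} b̄_j, and (iii) −b̄_j ≤ x_j − c_j ≤ b̄_j for all j ∈ {1,…,n}, then (x−c)ᵀ P (x−c) ≤ α². -/
open Matrix Finset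

lemma aux_abs_mul_le_half (a b c : ℝ) : -(|c| * (a ^ 2 + b ^ 2) / 2) ≤ a * c * b := by
  have h1 : 0 ≤ (|c| + c) * (a + b) ^ 2 :=
    mul_nonneg (by linarith [neg_abs_le c]) (sq_nonneg _)
  have h2 : 0 ≤ (|c| - c) * (a - b) ^ 2 :=
    mul_nonneg (by linarith [le_abs_self c]) (sq_nonneg _)
  nlinarith [h1, h2]

lemma aux_dd_psd {ι : Type*} [Fintype ι] [DecidableEq ι] (M : ι → ι → ℝ)
    (hsym : ∀ j k, M j k = M k j)
    (hdd : ∀ j, ∑ k, |M j k| ≤ 2 * M j j) (w : ι → ℝ) :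
    0 ≤ ∑ j, ∑ k, w j * M j k * w k := by
  classical
  have hMdiag : ∀ j, 0 ≤ M j j := by
    intro j
    have h1 : |M j j| ≤ ∑ k, |M j k| :=
      Finset.single_le_sum (fun k _ => abs_nonneg (M j k)) (Finset.mem_univ j)
    have h2 := hdd j
    rcases abs_cases (M j j) with ⟨e, _⟩ | ⟨e, _⟩ <;> linarith
  have hoffle : ∀ j, ∑ k ∈ univ.erase j, |M j k| ≤ M j j := by
    intro j
    have h : |M j j| + ∑ k ∈ univ.erase j, |M j k| = ∑ k, |M j k| :=
      Finset.add_sum_erase univ (fun k => |M j k|) (Finset.mem_univ j)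
    have h2 := hdd j
    rw [abs_of_nonneg (hMdiag j)] at h
    linarith
  have key : ∀ j, M j j * w j ^ 2 - ∑ k ∈ univ.erase j, |M j k| * (w j ^ 2 + w k ^ 2) / 2
      ≤ ∑ k, w j * M j k * w k := by
    intro j
    rw [← Finset.add_sum_erase univ (fun k => w j * M j k * w k) (Finset.mem_univ j)]
    have hb : ∑ k ∈ univ.erase j, (-(|M j k| * (w j ^ 2 + w k ^ 2) / 2)) ≤
        ∑ k ∈ univ.erase j, w j * M j k * w k :=
      Finset.sum_le_sum fun k _ => aux_abs_mul_le_half (w j) (w k) (M j k)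
    rw [Finset.sum_neg_distrib] at hb
    have he : M j j * w j ^ 2 = w j * M j j * w j := by ring
    linarith
  -- swap argument
  set g : ι → ι → ℝ := fun j k => if j = k then 0 else |M j k| * w k ^ 2 with hg
  have hinner : ∀ j, ∑ k ∈ univ.erase j, |M j k| * w k ^ 2 = ∑ k, g j k := by
    intro j
    have h0 : g j j = 0 := by simp [hg]
    rw [show (∑ k, g j k) = ∑ k ∈ univ.erase j, g j k from
      (Finset.sum_erase univ h0).symm]
    exact Finset.sum_congr rfl fun k hk => by
      simp [hg, (Finset.ne_of_mem_erase hk).symm]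
  have hswap : ∑ j, ∑ k ∈ univ.erase j, |M j k| * w k ^ 2
      = ∑ j, ∑ k ∈ univ.erase j, |M j k| * w j ^ 2 := by
    calc ∑ j, ∑ k ∈ univ.erase j, |M j k| * w k ^ 2 = ∑ j, ∑ k, g j k := by
          exact Finset.sum_congr rfl fun j _ => hinner j
      _ = ∑ k, ∑ j, g j k := Finset.sum_comm
      _ = ∑ j, ∑ k, g k j := rfl
      _ = ∑ j, ∑ k ∈ univ.erase j, |M j k| * w j ^ 2 := by
          refine Finset.sum_congr rfl fun j _ => ?_
          have h0 : g j j = 0 := by simp [hg]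
          rw [show (∑ k, g k j) = ∑ k ∈ univ.erase j, g k j from
            (Finset.sum_erase (f := fun k => g k j) univ h0).symm]
          exact Finset.sum_congr rfl fun k hk => by
            simp [hg, Finset.ne_of_mem_erase hk, hsym k j]
  have hsplit : ∀ j, ∑ k ∈ univ.erase j, |M j k| * (w j ^ 2 + w k ^ 2) / 2
      = (∑ k ∈ univ.erase j, |M j k| * w j ^ 2) / 2
        + (∑ k ∈ univ.erase j, |M j k| * w k ^ 2) / 2 := by
    intro j
    rw [Finset.sum_div, Finset.sum_div, ← Finset.sum_add_distrib]
    exact Finset.sum_congr rfl fun k _ => by ring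
  have hbound : ∑ j, ∑ k ∈ univ.erase j, |M j k| * (w j ^ 2 + w k ^ 2) / 2
      ≤ ∑ j, M j j * w j ^ 2 := by
    calc ∑ j, ∑ k ∈ univ.erase j, |M j k| * (w j ^ 2 + w k ^ 2) / 2
        = ∑ j, ((∑ k ∈ univ.erase j, |M j k| * w j ^ 2) / 2
            + (∑ k ∈ univ.erase j, |M j k| * w k ^ 2) / 2) :=
          Finset.sum_congr rfl fun j _ => hsplit j
      _ = (∑ j, ∑ k ∈ univ.erase j, |M j k| * w j ^ 2) / 2
            + (∑ j, ∑ k ∈ univ.erase j, |M j k| * w k ^ 2) / 2 := by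
          rw [Finset.sum_add_distrib, Finset.sum_div, Finset.sum_div]
      _ = ∑ j, ∑ k ∈ univ.erase j, |M j k| * w j ^ 2 := by rw [hswap]; ring
      _ = ∑ j, (∑ k ∈ univ.erase j, |M j k|) * w j ^ 2 := by
          exact Finset.sum_congr rfl fun j _ => by rw [Finset.sum_mul]
      _ ≤ ∑ j, M j j * w j ^ 2 :=
          Finset.sum_le_sum fun j _ =>
            mul_le_mul_of_nonneg_right (hoffle j) (sq_nonneg _)
  have h0 : 0 ≤ ∑ j, (M j j * w j ^ 2 - ∑ k ∈ univ.erase j, |M j k| * (w j ^ 2 + w k ^ 2) / 2) := by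
    rw [Finset.sum_sub_distrib]
    linarith
  calc (0:ℝ) ≤ _ := h0
    _ ≤ ∑ j, ∑ k, w j * M j k * w k := Finset.sum_le_sum fun j _ => key j

/-- The conservative linear approximation (7) of the ellipsoidal terminal
constraint: diagonal dominance conditions on `P⁻¹` together with the
componentwise bound `|x − c| ≤ b̄` imply `(x−c)ᵀP(x−c) ≤ α²`. -/
theorem stmt_9 {n : ℕ} (P : Matrix (Fin n) (Fin n) ℝ) (hP : P.PosDef)
    (α : ℝ) (hα : 0 < α) (x c bbar : Fin n → ℝ)
    (hbbar : ∀ j, 0 ≤ bbar j)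
    (h1 : ∀ j : Fin n, 2 * α * P⁻¹ j j ≥ bbar j + α * ∑ k : Fin n, |P⁻¹ j k|)
    (h2 : α ≥ ∑ j : Fin n, bbar j)
    (h3 : ∀ j : Fin n, -bbar j ≤ x j - c j ∧ x j - c j ≤ bbar j) :
    (x - c) ⬝ᵥ (P *ᵥ (x - c)) ≤ α ^ 2 := by
  classical
  set y : Fin n → ℝ := x - c with hy
  have hyj : ∀ j, y j = x j - c j := fun j => rfl
  have hyabs : ∀ j, |y j| ≤ bbar j := fun j => abs_le.2 ⟨by rw [hyj]; exact (h3 j).1, by rw [hyj]; exact (h3 j).2⟩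
  set Q : Matrix (Fin n) (Fin n) ℝ := P⁻¹ with hQdef
  have hQsym : ∀ j k, Q j k = Q k j := by
    intro j k
    simpa [hQdef] using ((hP.isHermitian.inv).apply j k).symm
  set u : Fin n → ℝ := P *ᵥ y with hu
  have hQPy : Q *ᵥ u = y := by
    rw [hu, Matrix.mulVec_mulVec, Matrix.nonsing_inv_mul P hP.det_pos.ne'.isUnit,
      Matrix.one_mulVec]
  have hQu : ∀ j, ∑ k, Q j k * u k = y j := by
    intro j
    have := congrFun hQPy j
    simpa [Matrix.mulVec, dotProduct] using this
  set S : ℝ := ∑ j, y j * u j with hS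
  have hgoal : (x - c) ⬝ᵥ (P *ᵥ (x - c)) = S := by
    simp [hS, dotProduct, hy, hu]
  rw [hgoal]
  -- block matrix
  set M : (Fin n ⊕ Unit) → (Fin n ⊕ Unit) → ℝ :=
    Sum.elim (fun j => Sum.elim (fun k => α * Q j k) (fun _ => y j))
      (fun _ => Sum.elim (fun k => y k) (fun _ => α)) with hM
  set w : (Fin n ⊕ Unit) → ℝ := Sum.elim (fun j => -(α⁻¹ * u j)) (fun _ => 1) with hw
  have hsym : ∀ a b, M a b = M b a := by
    intro a b
    cases a with
    | inl j =>
      cases b with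
      | inl k => simp [hM, hQsym j k]
      | inr _ => simp [hM]
    | inr _ => cases b <;> simp [hM]
  have hdd : ∀ a, ∑ b, |M a b| ≤ 2 * M a a := by
    rintro (j | _)
    · have hh := h1 j
      have habs : ∑ b : Fin n ⊕ Unit, |M (Sum.inl j) b|
          = α * (∑ k, |Q j k|) + |y j| := by
        rw [Fintype.sum_sum_type]
        simp [hM, abs_mul, abs_of_pos hα, Finset.mul_sum]
      rw [habs]
      have := hyabs j
      simp only [hM, Sum.elim_inl]
      linarith
    · have habs : ∑ b : Fin n ⊕ Unit, |M (Sum.inr ()) b|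
          = (∑ k, |y k|) + |α| := by
        rw [Fintype.sum_sum_type]
        simp [hM]
      rw [habs, abs_of_pos hα]
      have hsb : ∑ k, |y k| ≤ ∑ k, bbar k := Finset.sum_le_sum fun k _ => hyabs k
      simp only [hM, Sum.elim_inr]
      linarith
  have h0 := aux_dd_psd M hsym hdd w
  have hexp : ∑ a, ∑ b, w a * M a b * w b = α - α⁻¹ * S := by
    rw [Fintype.sum_sum_type]
    have hrow1 : ∀ j : Fin n, ∑ b, w (Sum.inl j) * M (Sum.inl j) b * w b
        = α⁻¹ * (u j * y j) - α⁻¹ * (u j * y j) := by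
      intro j
      rw [Fintype.sum_sum_type]
      have hA : ∑ k, w (Sum.inl j) * M (Sum.inl j) (Sum.inl k) * w (Sum.inl k)
          = α⁻¹ * (u j * y j) := by
        have : ∑ k, w (Sum.inl j) * M (Sum.inl j) (Sum.inl k) * w (Sum.inl k)
            = (α⁻¹ * u j) * α * α⁻¹ * ∑ k, Q j k * u k := by
          rw [Finset.mul_sum]
          refine Finset.sum_congr rfl fun k _ => ?_
          simp [hM, hw]; ring
        rw [this, hQu j]
        field_simp
      have hB : ∑ _b : Unit, w (Sum.inl j) * M (Sum.inl j) (Sum.inr _b) * w (Sum.inr _b)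
          = -(α⁻¹ * (u j * y j)) := by
        simp [hM, hw]
        ring
      rw [hA, hB]; ring
    have hrow2 : ∑ b, w (Sum.inr ()) * M (Sum.inr ()) b * w b = α - α⁻¹ * S := by
      rw [Fintype.sum_sum_type]
      have hA : ∑ k, w (Sum.inr ()) * M (Sum.inr ()) (Sum.inl k) * w (Sum.inl k)
          = -(α⁻¹ * S) := by
        rw [hS, Finset.mul_sum, ← Finset.sum_neg_distrib]
        refine Finset.sum_congr rfl fun k _ => ?_
        simp [hM, hw]; ring
      have hB : ∑ _b : Unit, w (Sum.inr ()) * M (Sum.inr ()) (Sum.inr _b) * w (Sum.inr _b)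
          = α := by simp [hM, hw]
      rw [hA, hB]; ring
    have : ∑ j : Fin n, ∑ b, w (Sum.inl j) * M (Sum.inl j) b * w b = 0 := by
      rw [Finset.sum_congr rfl fun j _ => hrow1 j]; simp
    rw [this]
    have : ∑ _a : Unit, ∑ b, w (Sum.inr _a) * M (Sum.inr _a) b * w b = α - α⁻¹ * S := by
      simpa using hrow2
    rw [this]; ring
  rw [hexp] at h0
  have hle : α⁻¹ * S ≤ α := by linarith
  have hSle : S ≤ α * α := by
    have h := mul_le_mul_of_nonneg_left hle (le_of_lt hα)
    have hne : α ≠ 0 := ne_of_gt hα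
    calc S = α * (α⁻¹ * S) := by field_simp
      _ ≤ α * α := h
  nlinarith [hSle]
end

section
/- Consider M subsystems with state dimensions n₁, …, n_M, neighbour sets 𝒩_i ⊆ {1,…,M} with i ∈ 𝒩_i, block matrices A_{ij} ∈ ℝ^{n_i×n_j} for j ∈ 𝒩_i, B_i ∈ ℝ^{n_i×m_i}, K_i ∈ ℝ^{m_i×n_i}, symmetric positive semidefinite P_i ∈ ℝ^{n_i×n_i}, symmetric Q_i ∈ ℝ^{n_i×n_i} and R_i ∈ ℝ^{m_i×m_i}, and scalars n_{ij} ≥ 0 with n_{ij} = 0 whenever j ∉ 𝒩_i and Σ_{i=1}^{M} n_{ij} ≤ 1 for every j. For a global state x = (x₁, …, x_M), define the closed-loop successor blocks x_i⁺ = Σ_{j∈𝒩_i} A_{ij} x_j + B_i K_i x_i. Suppose that for every subsystem i and every choice of the blocks (x_j)_{j∈𝒩_i}, Σ_{j∈𝒩_i} n_{ij} x_jᵀ P_j x_j − x_iᵀ (Q_i + K_iᵀ R_i K_i) x_i − (x_i⁺)ᵀ P_i x_i⁺ ≥ 0. Then for every global state x, Σ_{i=1}^{M} x_iᵀ P_i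 x_i − Σ_{i=1}^{M} (x_i⁺)ᵀ P_i x_i⁺ − Σ_{i=1}^{M} x_iᵀ (Q_i + K_iᵀ R_i K_i) x_i ≥ 0. -/
open Matrix

/-- Core of Theorem 2: the local quadratic-form inequalities (12), with
weighting scalars `ν i j` (supported on neighbours, with column sums at most 1),
imply the global Lyapunov inequality for the networked closed-loop dynamics
`x_i⁺ = Σ_{j∈𝒩_i} A_{ij} x_j + B_i K_i x_i`. -/
theorem stmt_10 {M : ℕ} (n m : Fin M → ℕ)
    (𝒩 : Fin M → Finset (Fin M)) (hself : ∀ i, i ∈ 𝒩 i)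
    (A : ∀ i j : Fin M, Matrix (Fin (n i)) (Fin (n j)) ℝ)
    (B : ∀ i : Fin M, Matrix (Fin (n i)) (Fin (m i)) ℝ)
    (K : ∀ i : Fin M, Matrix (Fin (m i)) (Fin (n i)) ℝ)
    (P Q : ∀ i : Fin M, Matrix (Fin (n i)) (Fin (n i)) ℝ)
    (R : ∀ i : Fin M, Matrix (Fin (m i)) (Fin (m i)) ℝ)
    (hP : ∀ i, (P i).PosSemidef)
    (hQ : ∀ i, (Q i).IsSymm) (hR : ∀ i, (R i).IsSymm)
    (ν : Fin M → Fin M → ℝ)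
    (hν0 : ∀ i j, 0 ≤ ν i j)
    (hνN : ∀ i j, j ∉ 𝒩 i → ν i j = 0)
    (hνsum : ∀ j, ∑ i : Fin M, ν i j ≤ 1)
    (hlocal : ∀ (i : Fin M) (x : ∀ j : Fin M, Fin (n j) → ℝ),
      ∑ j ∈ 𝒩 i, ν i j * (x j ⬝ᵥ (P j *ᵥ x j))
        - x i ⬝ᵥ ((Q i + (K i)ᵀ * R i * K i) *ᵥ x i)
        - ((∑ j ∈ 𝒩 i, A i j *ᵥ x j) + B i *ᵥ (K i *ᵥ x i)) ⬝ᵥ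
            (P i *ᵥ ((∑ j ∈ 𝒩 i, A i j *ᵥ x j) + B i *ᵥ (K i *ᵥ x i))) ≥ 0) :
    ∀ x : ∀ j : Fin M, Fin (n j) → ℝ,
      ∑ i : Fin M, x i ⬝ᵥ (P i *ᵥ x i)
        - ∑ i : Fin M,
            ((∑ j ∈ 𝒩 i, A i j *ᵥ x j) + B i *ᵥ (K i *ᵥ x i)) ⬝ᵥ
              (P i *ᵥ ((∑ j ∈ 𝒩 i, A i j *ᵥ x j) + B i *ᵥ (K i *ᵥ x i)))
        - ∑ i : Fin M, x i ⬝ᵥ ((Q i + (K i)ᵀ * R i * K i) *ᵥ x i) ≥ 0 := by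
  intro x
  set q : Fin M → ℝ := fun j => x j ⬝ᵥ (P j *ᵥ x j) with hq
  set l : Fin M → ℝ := fun i => x i ⬝ᵥ ((Q i + (K i)ᵀ * R i * K i) *ᵥ x i)
  set s : Fin M → ℝ := fun i =>
    ((∑ j ∈ 𝒩 i, A i j *ᵥ x j) + B i *ᵥ (K i *ᵥ x i)) ⬝ᵥ
      (P i *ᵥ ((∑ j ∈ 𝒩 i, A i j *ᵥ x j) + B i *ᵥ (K i *ᵥ x i)))
  have hqpos : ∀ j, 0 ≤ q j := by
    intro j
    have := (hP j).dotProduct_mulVec_nonneg (x j)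
    simpa using this
  have hsum : 0 ≤ ∑ i : Fin M, (∑ j ∈ 𝒩 i, ν i j * q j - l i - s i) :=
    Finset.sum_nonneg fun i _ => hlocal i x
  have hext : ∀ i : Fin M, ∑ j ∈ 𝒩 i, ν i j * q j = ∑ j : Fin M, ν i j * q j := by
    intro i
    exact Finset.sum_subset (Finset.subset_univ _)
      (fun j _ hj => by rw [hνN i j hj, zero_mul])
  have hext' : (∑ i : Fin M, ∑ j ∈ 𝒩 i, ν i j * q j)
      = ∑ j : Fin M, (∑ i : Fin M, ν i j) * q j := by
    rw [Finset.sum_congr rfl fun i _ => hext i, Finset.sum_comm]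
    simp [Finset.sum_mul]
  have hle : ∑ j : Fin M, (∑ i : Fin M, ν i j) * q j ≤ ∑ j : Fin M, q j := by
    apply Finset.sum_le_sum
    intro j _
    calc (∑ i : Fin M, ν i j) * q j ≤ 1 * q j :=
          mul_le_mul_of_nonneg_right (hνsum j) (hqpos j)
      _ = q j := one_mul _
  have : 0 ≤ (∑ j : Fin M, q j) - ∑ i : Fin M, l i - ∑ i : Fin M, s i := by
    have h1 : ∑ i : Fin M, (∑ j ∈ 𝒩 i, ν i j * q j - l i - s i)
        = (∑ i : Fin M, ∑ j ∈ 𝒩 i, ν i j * q j) - ∑ i : Fin M, l i - ∑ i : Fin M, s i := by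
      simp [Finset.sum_sub_distrib]
    rw [h1, hext'] at hsum
    linarith
  linarith
end

section
/- Consider M subsystems with state dimensions n₁, …, n_M, neighbour sets 𝒩_i ⊆ {1,…,M} with i ∈ 𝒩_i, block matrices A_{ij} ∈ ℝ^{n_i×n_j} for j ∈ 𝒩_i, B_i ∈ ℝ^{n_i×m_i}, K_i ∈ ℝ^{m_i×n_i}, symmetric positive definite P_i ∈ ℝ^{n_i×n_i}, Q_i ∈ ℝ^{n_i×n_i} and R_i ∈ ℝ^{m_i×m_i}, and scalars n_{ij} ≥ 0 with n_{ij} = 0 whenever j ∉ 𝒩_i and Σ_{i=1}^{M} n_{ij} ≤ 1 for every j. Suppose that for every subsystem i and every choice of blocks (x_j)_{j∈𝒩_i}, Σ_{j∈𝒩_i} n_{ij} x_jᵀ P_j x_j − x_iᵀ (Q_i + K_iᵀ R_i K_i) x_i − (Σ_{j∈𝒩_i} A_{ij} x_j + B_i K_i x_i)ᵀ P_i (Σ_{j∈𝒩_i} A_{ij} x_j + B_i K_i x_i) ≥ 0. Then every trajectory of the networked closed-loop system x_i(t+1) = Σ_{j∈𝒩_i} A_{ij} x_j(t) + B_i K_i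 x_i(t), i = 1, …, M, converges to the origin as t → ∞. -/
open Matrix

lemma quad_lb {N : ℕ} {Q : Matrix (Fin N) (Fin N) ℝ} (hQ : Q.PosDef) :
    ∃ c > 0, ∀ y : Fin N → ℝ, c * (y ⬝ᵥ y) ≤ y ⬝ᵥ (Q *ᵥ y) := by
  rcases Nat.eq_zero_or_pos N with h0 | hpos
  · subst h0
    exact ⟨1, one_pos, fun y => by simp [Subsingleton.elim y 0]⟩
  · set S : Set (Fin N → ℝ) := {y | y ⬝ᵥ y = 1} with hS
    have hdotcont : Continuous fun y : Fin N → ℝ => y ⬝ᵥ y := by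
      simp only [dotProduct]
      exact continuous_finset_sum _ fun i _ => (continuous_apply i).mul (continuous_apply i)
    have hfcont : Continuous fun y : Fin N → ℝ => y ⬝ᵥ (Q *ᵥ y) := by
      simp only [dotProduct, mulVec, dotProduct]
      exact continuous_finset_sum _ fun i _ => (continuous_apply i).mul
        (continuous_finset_sum _ fun j _ => (continuous_const.mul (continuous_apply j)))
    have hclosed : IsClosed S := isClosed_eq hdotcont continuous_const
    have hbdd : S ⊆ Metric.closedBall 0 1 := by
      intro y hy
      rw [Metric.mem_closedBall, dist_zero_right]
      rw [pi_norm_le_iff_of_nonneg zero_le_one]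
      intro i
      have h1 : y i * y i ≤ y ⬝ᵥ y := by
        apply Finset.single_le_sum (f := fun j => y j * y j)
          (fun j _ => mul_self_nonneg (y j)) (Finset.mem_univ i)
      rw [hy] at h1
      rw [Real.norm_eq_abs]
      exact abs_le_one_iff_mul_self_le_one.2 h1
    have hcomp : IsCompact S :=
      (Metric.isCompact_of_isClosed_isBounded hclosed
        (Metric.isBounded_closedBall.subset hbdd))
    have hne : S.Nonempty := by
      refine ⟨Pi.single ⟨0, hpos⟩ 1, ?_⟩
      simp [hS, dotProduct, Pi.single_apply]
    obtain ⟨y₀, hy₀S, hmin⟩ := hcomp.exists_isMinOn hne hfcont.continuousOn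
    have hy₀ne : y₀ ≠ 0 := by
      intro h; rw [hS] at hy₀S; simp [h] at hy₀S
    have hc : 0 < y₀ ⬝ᵥ (Q *ᵥ y₀) := by
      have := hQ.dotProduct_mulVec_pos hy₀ne
      simpa using this
    refine ⟨_, hc, fun y => ?_⟩
    by_cases hy : y = 0
    · simp [hy]
    · have hyy : 0 < y ⬝ᵥ y := by
        have : 0 < y ⬝ᵥ star y := Matrix.dotProduct_self_star_pos_iff.2 hy
        simpa using this
      set t : ℝ := Real.sqrt (y ⬝ᵥ y) with htdef
      have ht : t * t = y ⬝ᵥ y := Real.mul_self_sqrt hyy.le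
      have htpos : 0 < t := Real.sqrt_pos.2 hyy
      have hu : (t⁻¹ • y) ⬝ᵥ (t⁻¹ • y) = 1 := by
        rw [smul_dotProduct, dotProduct_smul, smul_eq_mul, smul_eq_mul]
        field_simp
        rw [sq]; exact ht.symm
      have hmem : (t⁻¹ • y) ∈ S := hu
      have h2 := hmin hmem
      have h3 : (t⁻¹ • y) ⬝ᵥ (Q *ᵥ (t⁻¹ • y)) = t⁻¹ * t⁻¹ * (y ⬝ᵥ (Q *ᵥ y)) := by
        rw [mulVec_smul, smul_dotProduct, dotProduct_smul, smul_eq_mul, smul_eq_mul]; ring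
      have h4 : y₀ ⬝ᵥ (Q *ᵥ y₀) ≤ t⁻¹ * t⁻¹ * (y ⬝ᵥ (Q *ᵥ y)) := by
        simpa [h3] using h2
      have h5 := mul_le_mul_of_nonneg_left h4 (le_of_lt (mul_pos htpos htpos))
      calc y₀ ⬝ᵥ (Q *ᵥ y₀) * (y ⬝ᵥ y) = (t * t) * (y₀ ⬝ᵥ (Q *ᵥ y₀)) := by rw [ht]; ring
        _ ≤ (t * t) * (t⁻¹ * t⁻¹ * (y ⬝ᵥ (Q *ᵥ y))) := h5
        _ = y ⬝ᵥ (Q *ᵥ y) := by field_simp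

/-- Theorem 2 combined with the Lyapunov convergence argument: the local
quadratic-form inequalities (12) with weighting scalars `ν i j` (supported on
neighbours, column sums at most 1) and positive definite blocks `P_i, Q_i, R_i`
force every trajectory of the networked closed loop
`x_i(t+1) = Σ_{j∈𝒩_i} A_{ij} x_j(t) + B_i K_i x_i(t)` to converge to 0. -/
theorem stmt_12 {M : ℕ} (n m : Fin M → ℕ)
    (𝒩 : Fin M → Finset (Fin M)) (hself : ∀ i, i ∈ 𝒩 i)
    (A : ∀ i j : Fin M, Matrix (Fin (n i)) (Fin (n j)) ℝ)
    (B : ∀ i : Fin M, Matrix (Fin (n i)) (Fin (m i)) ℝ)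
    (K : ∀ i : Fin M, Matrix (Fin (m i)) (Fin (n i)) ℝ)
    (P Q : ∀ i : Fin M, Matrix (Fin (n i)) (Fin (n i)) ℝ)
    (R : ∀ i : Fin M, Matrix (Fin (m i)) (Fin (m i)) ℝ)
    (hP : ∀ i, (P i).PosDef) (hQ : ∀ i, (Q i).PosDef)
    (hR : ∀ i, (R i).PosDef)
    (ν : Fin M → Fin M → ℝ)
    (hν0 : ∀ i j, 0 ≤ ν i j)
    (hνN : ∀ i j, j ∉ 𝒩 i → ν i j = 0)
    (hνsum : ∀ j, ∑ i : Fin M, ν i j ≤ 1)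
    (hlocal : ∀ (i : Fin M) (x : ∀ j : Fin M, Fin (n j) → ℝ),
      ∑ j ∈ 𝒩 i, ν i j * (x j ⬝ᵥ (P j *ᵥ x j))
        - x i ⬝ᵥ ((Q i + (K i)ᵀ * R i * K i) *ᵥ x i)
        - ((∑ j ∈ 𝒩 i, A i j *ᵥ x j) + B i *ᵥ (K i *ᵥ x i)) ⬝ᵥ
            (P i *ᵥ ((∑ j ∈ 𝒩 i, A i j *ᵥ x j) + B i *ᵥ (K i *ᵥ x i))) ≥ 0)
    (x : ℕ → ∀ j : Fin M, Fin (n j) → ℝ)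
    (hx : ∀ t i, x (t + 1) i = (∑ j ∈ 𝒩 i, A i j *ᵥ x t j)
        + B i *ᵥ (K i *ᵥ x t i)) :
    Filter.Tendsto x Filter.atTop (nhds 0) := by
  -- quadratic-form nonnegativity helpers
  have hPnn : ∀ (i : Fin M) (y : Fin (n i) → ℝ), 0 ≤ y ⬝ᵥ (P i *ᵥ y) := fun i y => by
    have := (hP i).posSemidef.dotProduct_mulVec_nonneg y; simpa using this
  have hQnn : ∀ (i : Fin M) (y : Fin (n i) → ℝ), 0 ≤ y ⬝ᵥ (Q i *ᵥ y) := fun i y => by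
    have := (hQ i).posSemidef.dotProduct_mulVec_nonneg y; simpa using this
  have hRnn : ∀ (i : Fin M) (y : Fin (n i) → ℝ),
      0 ≤ y ⬝ᵥ (((K i)ᵀ * R i * K i) *ᵥ y) := fun i y => by
    have h1 : (((K i)ᵀ * R i * K i) *ᵥ y) = (K i)ᵀ *ᵥ (R i *ᵥ (K i *ᵥ y)) := by
      rw [← mulVec_mulVec, ← mulVec_mulVec]
    rw [h1, mulVec_transpose, dotProduct_comm, ← dotProduct_mulVec]
    have := (hR i).posSemidef.dotProduct_mulVec_nonneg (K i *ᵥ y); simpa [dotProduct_comm] using this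
  -- Lyapunov function and decrease
  set V : ℕ → ℝ := fun t => ∑ i, x t i ⬝ᵥ (P i *ᵥ x t i) with hV
  set W : ℕ → ℝ := fun t => ∑ i, x t i ⬝ᵥ (Q i *ᵥ x t i) with hW
  have hV0 : ∀ t, 0 ≤ V t := fun t => Finset.sum_nonneg fun i _ => hPnn i _
  have hW0 : ∀ t, 0 ≤ W t := fun t => Finset.sum_nonneg fun i _ => hQnn i _
  have hkey : ∀ t, V (t + 1) ≤ V t - W t := by
    intro t
    have hsum := Finset.sum_nonneg (fun i (_ : i ∈ Finset.univ) => hlocal i (x t))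
    rw [Finset.sum_sub_distrib, Finset.sum_sub_distrib] at hsum
    -- identify the last sum with V (t+1)
    have hnew : ∀ i : Fin M,
        ((∑ j ∈ 𝒩 i, A i j *ᵥ x t j) + B i *ᵥ (K i *ᵥ x t i)) ⬝ᵥ
          (P i *ᵥ ((∑ j ∈ 𝒩 i, A i j *ᵥ x t j) + B i *ᵥ (K i *ᵥ x t i)))
        = x (t + 1) i ⬝ᵥ (P i *ᵥ x (t + 1) i) := by
      intro i; rw [← hx t i]
    rw [Finset.sum_congr rfl (fun i _ => hnew i)] at hsum
    -- bound the ν-weighted sum by V t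
    have hbound : ∑ i : Fin M, ∑ j ∈ 𝒩 i, ν i j * (x t j ⬝ᵥ (P j *ᵥ x t j)) ≤ V t := by
      have hext' : ∑ i : Fin M, ∑ j ∈ 𝒩 i, ν i j * (x t j ⬝ᵥ (P j *ᵥ x t j))
          = ∑ i : Fin M, ∑ j : Fin M, ν i j * (x t j ⬝ᵥ (P j *ᵥ x t j)) := by
        refine Finset.sum_congr rfl fun i _ => ?_
        refine Finset.sum_subset (Finset.subset_univ _) fun j _ hj => ?_
        rw [hνN i j hj, zero_mul]
      rw [hext', Finset.sum_comm]
      refine Finset.sum_le_sum fun j _ => ?_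
      rw [← Finset.sum_mul]
      calc (∑ i : Fin M, ν i j) * (x t j ⬝ᵥ (P j *ᵥ x t j))
          ≤ 1 * (x t j ⬝ᵥ (P j *ᵥ x t j)) :=
            mul_le_mul_of_nonneg_right (hνsum j) (hPnn j _)
        _ = x t j ⬝ᵥ (P j *ᵥ x t j) := one_mul _
    -- bound the middle sum below by W t
    have hmid : W t ≤ ∑ i : Fin M, x t i ⬝ᵥ ((Q i + (K i)ᵀ * R i * K i) *ᵥ x t i) := by
      refine Finset.sum_le_sum fun i _ => ?_
      rw [add_mulVec, dotProduct_add]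
      exact le_add_of_nonneg_right (hRnn i _)
    have hVt1 : V (t + 1) = ∑ i : Fin M, x (t + 1) i ⬝ᵥ (P i *ᵥ x (t + 1) i) := rfl
    have hWt : W t = ∑ i : Fin M, x t i ⬝ᵥ (Q i *ᵥ x t i) := rfl
    linarith [hsum, hbound, hmid]
  -- summability of W, hence W → 0
  have hpartial : ∀ T, ∑ t ∈ Finset.range T, W t ≤ V 0 := by
    intro T
    have h1 : ∑ t ∈ Finset.range T, W t ≤ ∑ t ∈ Finset.range T, (V t - V (t + 1)) :=
      Finset.sum_le_sum fun t _ => by linarith [hkey t]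
    rw [Finset.sum_range_sub' V T] at h1
    linarith [hV0 T]
  have hWsum : Summable W := summable_of_sum_range_le hW0 hpartial
  have hWtend : Filter.Tendsto W Filter.atTop (nhds 0) := hWsum.tendsto_atTop_zero
  -- each block's Q-form tends to 0
  have hblock : ∀ i : Fin M,
      Filter.Tendsto (fun t => x t i ⬝ᵥ (Q i *ᵥ x t i)) Filter.atTop (nhds 0) := by
    intro i
    refine squeeze_zero (fun t => hQnn i _) (fun t => ?_) hWtend
    exact Finset.single_le_sum (f := fun j => x t j ⬝ᵥ (Q j *ᵥ x t j))
      (fun j _ => hQnn j _) (Finset.mem_univ i)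
  -- pass to coordinates
  rw [tendsto_pi_nhds]
  intro i
  rw [Pi.zero_apply, tendsto_pi_nhds]
  intro k
  simp only [Pi.zero_apply]
  obtain ⟨c, hc, hcb⟩ := quad_lb (hQ i)
  have hdtend : Filter.Tendsto (fun t => x t i ⬝ᵥ x t i) Filter.atTop (nhds 0) := by
    have h2 : Filter.Tendsto (fun t => c⁻¹ * (x t i ⬝ᵥ (Q i *ᵥ x t i)))
        Filter.atTop (nhds 0) := by
      simpa using (hblock i).const_mul c⁻¹
    refine squeeze_zero (fun t => ?_) (fun t => ?_) h2
    · have := dotProduct_self_star_nonneg (x t i); simpa using this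
    · have := hcb (x t i)
      rw [le_inv_mul_iff₀ hc]
      linarith
  have hsq : Filter.Tendsto (fun t => x t i k * x t i k) Filter.atTop (nhds 0) := by
    refine squeeze_zero (fun t => mul_self_nonneg _) (fun t => ?_) hdtend
    exact Finset.single_le_sum (f := fun j => x t i j * x t i j)
      (fun j _ => mul_self_nonneg _) (Finset.mem_univ k)
  rw [tendsto_zero_iff_abs_tendsto_zero]
  have habs : (abs ∘ fun t => x t i k) = fun t => Real.sqrt (x t i k * x t i k) := by
    funext t; simp [Function.comp, Real.sqrt_mul_self_eq_abs]
  rw [habs]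
  simpa [Function.comp_def] using (Real.continuous_sqrt.tendsto 0).comp hsq
end
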